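/- Suppose M is essentially finitary over a class C (there is a dense morphism of monads ρ : M° ⇒ M with M° finitary, dense over the closure of C under binary products). If a language K ⊆ M_ξ Σ is recognised by a morphism φ : M Σ → A with A ∈ C, then the syntactic congruence ≼_K is a congruence ordering on M Σ; in particular K has a syntactic algebra when A is finitary. -/

import Mathlib

/-- An object of `Pos`: a type equipped with a partial order. -/
structure Pos : Type 1 where
  car : Type
  po : PartialOrder car

attribute [instance] Pos.po

/-- Monotone maps between objects of `Pos`. -/
structure PHom (A B : Pos) where
  f : A.car → B.car
  mono : Monotone f

def PHom.id (A : Pos) : PHom A A := ⟨fun a => a, fun _ _ h => h⟩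

def PHom.comp {A B C : Pos} (g : PHom B C) (f : PHom A B) : PHom A C :=
  ⟨fun a => g.f (f.f a), fun _ _ h => g.mono (f.mono h)⟩

/-- A monad on the category `Pos` of partially ordered sets and monotone maps. -/
structure OMonad : Type 1 where
  obj : Pos → Pos
  map : {A B : Pos} → PHom A B → PHom (obj A) (obj B)
  map_id : ∀ A : Pos, map (PHom.id A) = PHom.id (obj A)
  map_comp : ∀ {A B C : Pos} (f : PHom A B) (g : PHom B C),
      map (g.comp f) = (map g).comp (map f)
  sing : ∀ A : Pos, PHom A (obj A)
  flat : ∀ A : Pos, PHom (obj (obj A)) (obj A)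
  sing_nat : ∀ {A B : Pos} (f : PHom A B), (map f).comp (sing A) = (sing B).comp f
  flat_nat : ∀ {A B : Pos} (f : PHom A B),
      (map f).comp (flat A) = (flat B).comp (map (map f))
  flat_sing : ∀ A, (flat A).comp (sing (obj A)) = PHom.id (obj A)
  flat_map_sing : ∀ A, (flat A).comp (map (sing A)) = PHom.id (obj A)
  flat_assoc : ∀ A, (flat A).comp (flat (obj A)) = (flat A).comp (map (flat A))

/-- An Eilenberg–Moore algebra for the monad `M`. -/
structure OAlg (M : OMonad) where
  A : Pos
  pi : PHom (M.obj A) A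
  unit_law : pi.comp (M.sing A) = PHom.id A
  assoc_law : pi.comp (M.map pi) = pi.comp (M.flat A)

/-- A morphism of Eilenberg–Moore algebras. -/
structure OAlgHom {M : OMonad} (X Y : OAlg M) where
  h : PHom X.A Y.A
  comm : h.comp X.pi = Y.pi.comp (M.map h)

def OAlgHom.comp {M : OMonad} {X Y Z : OAlg M} (g : OAlgHom Y Z) (f : OAlgHom X Y) :
    OAlgHom X Z :=
  ⟨g.h.comp f.h, by
    calc (g.h.comp f.h).comp X.pi = g.h.comp (f.h.comp X.pi) := rfl
      _ = g.h.comp (Y.pi.comp (M.map f.h)) := by rw [f.comm]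
      _ = (g.h.comp Y.pi).comp (M.map f.h) := rfl
      _ = (Z.pi.comp (M.map g.h)).comp (M.map f.h) := by rw [g.comm]
      _ = Z.pi.comp ((M.map g.h).comp (M.map f.h)) := rfl
      _ = Z.pi.comp (M.map (g.h.comp f.h)) := by rw [← M.map_comp]⟩

/-- The free `M`-algebra over `A`, carried by `M A` with product `flat`. -/
def OMonad.free (M : OMonad) (A : Pos) : OAlg M :=
  ⟨M.obj A, M.flat A, M.flat_sing A, (M.flat_assoc A).symm⟩

/- Sub-posets, products, relations as sub-posets of products. -/

def Pos.sub (A : Pos) (S : Set A.car) : Pos := ⟨{a : A.car // a ∈ S}, inferInstance⟩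

def subIncl (A : Pos) (S : Set A.car) : PHom (A.sub S) A := ⟨fun a => a.val, fun _ _ h => h⟩

def Pos.prod (A B : Pos) : Pos := ⟨A.car × B.car, inferInstance⟩

def prodFst (A B : Pos) : PHom (A.prod B) A := ⟨Prod.fst, fun _ _ h => h.1⟩
def prodSnd (A B : Pos) : PHom (A.prod B) B := ⟨Prod.snd, fun _ _ h => h.2⟩

/-- A relation `r` on `A`, as a sub-poset of `A × A`. -/
def relPos (A : Pos) (r : A.car → A.car → Prop) : Pos :=
  ⟨{p : A.car × A.car // r p.1 p.2}, inferInstance⟩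

def relFst (A : Pos) (r : A.car → A.car → Prop) : PHom (relPos A r) A :=
  ⟨fun p => p.val.1, fun _ _ h => h.1⟩
def relSnd (A : Pos) (r : A.car → A.car → Prop) : PHom (relPos A r) A :=
  ⟨fun p => p.val.2, fun _ _ h => h.2⟩

/- The standing convention on the monad `M`. -/

def PreservesInj (M : OMonad) : Prop :=
  ∀ {A B : Pos} (f : PHom A B), Function.Injective f.f → Function.Injective (M.map f).f
def PreservesSurj (M : OMonad) : Prop :=
  ∀ {A B : Pos} (f : PHom A B), Function.Surjective f.f → Function.Surjective (M.map f).f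
def PreservesBij (M : OMonad) : Prop :=
  ∀ {A B : Pos} (f : PHom A B), Function.Bijective f.f → Function.Bijective (M.map f).f
def PreservesPre (M : OMonad) : Prop :=
  ∀ {A B : Pos} (f : PHom A B) (S : Set B.car),
    Set.range (M.map (subIncl A (f.f ⁻¹' S))).f
      = (M.map f).f ⁻¹' Set.range (M.map (subIncl B S)).f

/-- `M` uses the standard ordering: the order on `M A` is the lift of the order on `A`. -/
def UsesStdOrder (M : OMonad) : Prop :=
  ∀ (A : Pos) (s t : (M.obj A).car),
    s ≤ t ↔ ∃ u : (M.obj (relPos A (fun a b => a ≤ b))).car,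
      (M.map (relFst A (fun a b => a ≤ b))).f u = s ∧
      (M.map (relSnd A (fun a b => a ≤ b))).f u = t

/-- The standing convention of the paper. -/
def Convention (M : OMonad) : Prop :=
  PreservesInj M ∧ PreservesSurj M ∧ PreservesBij M ∧ PreservesPre M ∧ UsesStdOrder M

/- Quotients by preorders containing the order. -/

/-- A preorder on (the carrier of) `A` containing the partial order of `A`. -/
structure PreCong (A : Pos) where
  r : A.car → A.car → Prop
  refl : ∀ a, r a a
  trans : ∀ a b c, r a b → r b c → r a c
  le_sub : ∀ a b : A.car, a ≤ b → r a b

def PreCong.setoid {A : Pos} (co : PreCong A) : Setoid A.car where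
  r a b := co.r a b ∧ co.r b a
  iseqv := ⟨fun a => ⟨co.refl a, co.refl a⟩, fun h => ⟨h.2, h.1⟩,
    fun h1 h2 => ⟨co.trans _ _ _ h1.1 h2.1, co.trans _ _ _ h2.2 h1.2⟩⟩

/-- The quotient poset `A/⊑`. -/
def quotPos {A : Pos} (co : PreCong A) : Pos where
  car := Quotient co.setoid
  po :=
    { le := Quotient.lift₂ co.r (fun a b a' b' ha hb => propext
        ⟨fun h => co.trans _ _ _ ha.2 (co.trans _ _ _ h hb.1),
         fun h => co.trans _ _ _ ha.1 (co.trans _ _ _ h hb.2)⟩)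
      le_refl := fun q => Quotient.inductionOn q co.refl
      lt := fun (x y : Quotient co.setoid) =>
        Quotient.lift₂ (s₁ := co.setoid) (s₂ := co.setoid) co.r (fun a b a' b' ha hb => propext
          ⟨fun h => co.trans _ _ _ ha.2 (co.trans _ _ _ h hb.1),
           fun h => co.trans _ _ _ ha.1 (co.trans _ _ _ h hb.2)⟩) x y ∧
        ¬ Quotient.lift₂ (s₁ := co.setoid) (s₂ := co.setoid) co.r (fun a b a' b' ha hb => propext
          ⟨fun h => co.trans _ _ _ ha.2 (co.trans _ _ _ h hb.1),
           fun h => co.trans _ _ _ ha.1 (co.trans _ _ _ h hb.2)⟩) y x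
      lt_iff_le_not_ge := fun _ _ => Iff.rfl
      le_trans := by
        intro q1 q2 q3
        refine Quotient.inductionOn₃ q1 q2 q3 ?_
        intro a b d h1 h2
        exact co.trans a b d h1 h2
      le_antisymm := by
        intro q1 q2
        refine Quotient.inductionOn₂ q1 q2 ?_
        intro a b h1 h2
        exact Quotient.sound ⟨h1, h2⟩ }

/-- The quotient map `A → A/⊑`. -/
def quotHom {A : Pos} (co : PreCong A) : PHom A (quotPos co) :=
  ⟨fun a => Quotient.mk co.setoid a, fun a b h => co.le_sub a b h⟩

/-- `⊑` is a congruence ordering on the algebra `X`: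
`s ⊑_M t` (i.e. `M q (s) ≤ M q (t)`) implies `π(s) ⊑ π(t)`. -/
def IsCongOrdP (M : OMonad) (X : OAlg M) (co : PreCong X.A) : Prop :=
  ∀ s t : (M.obj X.A).car,
    (M.map (quotHom co)).f s ≤ (M.map (quotHom co)).f t → co.r (X.pi.f s) (X.pi.f t)

/-- The relation `r` is a congruence ordering on the algebra `X`. -/
def IsCongruenceOrdering (M : OMonad) (X : OAlg M) (r : X.A.car → X.A.car → Prop) : Prop :=
  ∃ (h1 : ∀ a, r a a) (h2 : ∀ a b c, r a b → r b c → r a c)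
    (h3 : ∀ a b : X.A.car, a ≤ b → r a b),
    IsCongOrdP M X ⟨r, h1, h2, h3⟩

/- Contexts and syntactic congruences. -/

/-- `A + □`: the poset `A` extended by a single extra point `□`. -/
def Pos.addBox (A : Pos) : Pos := ⟨A.car ⊕ PUnit, inferInstance⟩

/-- The map `A + □ → A` substituting `a` for `□`. -/
def substHom (M : OMonad) (X : OAlg M) (a : X.A.car) : PHom X.A.addBox X.A :=
  ⟨fun z => Sum.elim (fun x => x) (fun _ => a) z, by
    intro x y h
    cases h with
    | inl h => exact h
    | inr h => exact le_refl a⟩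

/-- Evaluation `p[a]` of a context `p ∈ M(A + □)` at `a ∈ A`. -/
def ctxEval (M : OMonad) (X : OAlg M) (p : (M.obj X.A.addBox).car) (a : X.A.car) : X.A.car :=
  X.pi.f ((M.map (substHom M X a)).f p)

/-- The syntactic congruence `a ≼_K b` of a set `K`. -/
def synLe (M : OMonad) (X : OAlg M) (K : Set X.A.car) (a b : X.A.car) : Prop :=
  ∀ p : (M.obj X.A.addBox).car, ctxEval M X p a ∈ K → ctxEval M X p b ∈ K

def UpClosed (A : Pos) (K : Set A.car) : Prop :=
  ∀ a b : A.car, a ∈ K → a ≤ b → b ∈ K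

/-- The derivative `p⁻¹[K]` of `K` by the context `p`. -/
def ctxDeriv (M : OMonad) (X : OAlg M) (p : (M.obj X.A.addBox).car) (K : Set X.A.car) :
    Set X.A.car :=
  {a | ctxEval M X p a ∈ K}

/-- `A` carries the trivial (discrete) order. -/
def TrivOrder (A : Pos) : Prop := ∀ a b : A.car, a ≤ b → a = b

/-- A morphism from a free algebra recognises a language `K` if `K` is the preimage of
an upwards closed set. -/
def Recognises {M : OMonad} {Sg : Pos} {X : OAlg M} (φ : OAlgHom (M.free Sg) X)
    (K : Set ((M.obj Sg).car)) : Prop :=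
  ∃ P : Set X.A.car, UpClosed X.A P ∧ K = φ.h.f ⁻¹' P

/-- Embedding of `Σ + □` into `(M Σ) + □` via `sing`, used to view contexts over the
alphabet as contexts over the free algebra. -/
def singBox (M : OMonad) (Sg : Pos) : PHom Sg.addBox (M.obj Sg).addBox :=
  ⟨Sum.map (M.sing Sg).f (fun x => x), by
    intro x y h
    cases h with
    | inl h => exact Sum.LiftRel.inl ((M.sing Sg).mono h)
    | inr h => exact Sum.LiftRel.inr h⟩

/-- Evaluation of a context `p ∈ M(Σ + □)` at an element `s ∈ M Σ` of the free algebra. -/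
def freeCtxEval (M : OMonad) (Sg : Pos) (p : (M.obj Sg.addBox).car) (s : (M.obj Sg).car) :
    (M.obj Sg).car :=
  ctxEval M (M.free Sg) ((M.map (singBox M Sg)).f p) s

/- Finitary monads and algebras. -/

/-- `M` is finitary: it preserves directed unions. -/
def FinitaryM (M : OMonad) : Prop :=
  ∀ (A : Pos) (ι : Type) (D : ι → Set A.car), Directed (· ⊆ ·) D → (⋃ i, D i) = Set.univ →
    ∀ s : (M.obj A).car, ∃ i, ∃ s₀ : (M.obj (A.sub (D i))).car,
      (M.map (subIncl A (D i))).f s₀ = s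

/-- A finitary algebra: (sort-wise) finite universe and finitely generated. -/
def FinitaryAlg (M : OMonad) (X : OAlg M) : Prop :=
  Finite X.A.car ∧ ∃ C : Set X.A.car, C.Finite ∧
    ∀ a : X.A.car, ∃ s : (M.obj (X.A.sub C)).car, a = X.pi.f ((M.map (subIncl X.A C)).f s)
/-- A morphism of monads `M₀ ⇒ M₁`. -/
structure OMonadHom (M₀ M₁ : OMonad) where
  app : ∀ A : Pos, PHom (M₀.obj A) (M₁.obj A)
  naturality : ∀ {A B : Pos} (f : PHom A B),
      (app B).comp (M₀.map f) = (M₁.map f).comp (app A)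
  sing_comm : ∀ A : Pos, (app A).comp (M₀.sing A) = M₁.sing A
  flat_comm : ∀ A : Pos,
      (app A).comp (M₀.flat A)
        = (M₁.flat A).comp ((app (M₁.obj A)).comp (M₀.map (app A)))

/-- The `ρ`-reduct of an `M₁`-algebra: the `M₀`-algebra with product `π ∘ ρ`. -/
def OMonadHom.reduct {M₀ M₁ : OMonad} (ρ : OMonadHom M₀ M₁) (X : OAlg M₁) : OAlg M₀ where
  A := X.A
  pi := X.pi.comp (ρ.app X.A)
  unit_law := by
    calc (X.pi.comp (ρ.app X.A)).comp (M₀.sing X.A)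
        = X.pi.comp ((ρ.app X.A).comp (M₀.sing X.A)) := rfl
      _ = X.pi.comp (M₁.sing X.A) := by rw [ρ.sing_comm]
      _ = PHom.id X.A := X.unit_law
  assoc_law := by
    have hnat := ρ.naturality (X.pi.comp (ρ.app X.A))
    have hint := ρ.naturality (ρ.app X.A)
    calc (X.pi.comp (ρ.app X.A)).comp (M₀.map (X.pi.comp (ρ.app X.A)))
        = X.pi.comp ((ρ.app X.A).comp (M₀.map (X.pi.comp (ρ.app X.A)))) := rfl
      _ = X.pi.comp ((M₁.map (X.pi.comp (ρ.app X.A))).comp (ρ.app (M₀.obj X.A))) := by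
            rw [hnat]
      _ = (X.pi.comp (M₁.map (X.pi.comp (ρ.app X.A)))).comp (ρ.app (M₀.obj X.A)) := rfl
      _ = (X.pi.comp ((M₁.map X.pi).comp (M₁.map (ρ.app X.A)))).comp (ρ.app (M₀.obj X.A)) := by
            rw [M₁.map_comp]
      _ = ((X.pi.comp (M₁.map X.pi)).comp (M₁.map (ρ.app X.A))).comp (ρ.app (M₀.obj X.A)) := rfl
      _ = ((X.pi.comp (M₁.flat X.A)).comp (M₁.map (ρ.app X.A))).comp (ρ.app (M₀.obj X.A)) := by
            rw [X.assoc_law]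
      _ = X.pi.comp ((M₁.flat X.A).comp ((M₁.map (ρ.app X.A)).comp (ρ.app (M₀.obj X.A)))) := rfl
      _ = X.pi.comp ((M₁.flat X.A).comp ((ρ.app (M₁.obj X.A)).comp (M₀.map (ρ.app X.A)))) := by
            rw [hint]
      _ = X.pi.comp ((ρ.app X.A).comp (M₀.flat X.A)) := by rw [← ρ.flat_comm]
      _ = (X.pi.comp (ρ.app X.A)).comp (M₀.flat X.A) := rfl

/-- `ρ : M₀ ⇒ M₁` is dense over the class `C`. -/
def DenseOver {M₀ M₁ : OMonad} (ρ : OMonadHom M₀ M₁) (C : Set (OAlg M₁)) : Prop :=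
  ∀ X ∈ C, ∀ (S : Set X.A.car) (s : (M₁.obj (X.A.sub S)).car),
    ∃ s₀ : (M₀.obj (X.A.sub S)).car,
      X.pi.f ((ρ.app X.A).f ((M₀.map (subIncl X.A S)).f s₀))
        = X.pi.f ((M₁.map (subIncl X.A S)).f s)

/-- `P` is a binary product of `A` and `B` in the category of `M`-algebras
(concretely: the projections induce an order isomorphism with the product poset). -/
def IsBinProd (M : OMonad) (P A B : OAlg M) : Prop :=
  ∃ (pa : OAlgHom P A) (pb : OAlgHom P B),
    Function.Bijective (fun x => (pa.h.f x, pb.h.f x)) ∧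
    ∀ x y : P.A.car, x ≤ y ↔ (pa.h.f x ≤ pa.h.f y ∧ pb.h.f x ≤ pb.h.f y)

/-- Closure of a class of algebras under binary products. -/
inductive InProdClosure (M : OMonad) (C : Set (OAlg M)) : OAlg M → Prop
  | base : ∀ A ∈ C, InProdClosure M C A
  | prod : ∀ A B P, InProdClosure M C A → InProdClosure M C B →
      IsBinProd M P A B → InProdClosure M C P

/-- `P` is a product of the family `A` of `M`-algebras. -/
def IsProdOf (M : OMonad) (P : OAlg M) {I : Type} (A : I → OAlg M) : Prop :=
  ∃ p : ∀ i, OAlgHom P (A i),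
    Function.Bijective (fun (x : P.A.car) (i : I) => (p i).h.f x) ∧
    ∀ x y : P.A.car, x ≤ y ↔ ∀ i, (p i).h.f x ≤ (p i).h.f y

/-- `B` is a quotient of `A`. -/
def IsQuotientOf (M : OMonad) (B A : OAlg M) : Prop :=
  ∃ φ : OAlgHom A B, Function.Surjective φ.h.f

/-- `B` is a subalgebra of `A` (an order embedding which is a morphism). -/
def IsSubalgebraOf (M : OMonad) (B A : OAlg M) : Prop :=
  ∃ φ : OAlgHom B A, ∀ x y : B.A.car, φ.h.f x ≤ φ.h.f y ↔ x ≤ y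

/-- A pseudo-variety (here with a single sort): a class of finitary algebras closed
under quotients, finitary subalgebras of finite products, and (the single-sorted
instance of) sort-accumulation points. -/
def PseudoVariety (M : OMonad) (V : Set (OAlg M)) : Prop :=
  (∀ X ∈ V, FinitaryAlg M X) ∧
  (∀ A ∈ V, ∀ B, IsQuotientOf M B A → B ∈ V) ∧
  (∀ (n : ℕ) (A : Fin n → OAlg M), (∀ i, A i ∈ V) →
    ∀ P, IsProdOf M P A → ∀ B, FinitaryAlg M B → IsSubalgebraOf M B P → B ∈ V) ∧
  (∀ B, FinitaryAlg M B → (∃ A ∈ V, IsQuotientOf M A B) → B ∈ V)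

/-- The inclusion of a relation, as a sub-poset, into the product poset. -/
def relIncl (A : Pos) (r : A.car → A.car → Prop) : PHom (relPos A r) (A.prod A) :=
  ⟨fun p => p.val, fun _ _ h => h⟩

/- ===== Auxiliary material for the proof ===== -/

attribute [reducible] OMonad.free relPos Pos.sub Pos.prod Pos.addBox

theorem phom_ext {A B : Pos} {f g : PHom A B} (h : ∀ x, f.f x = g.f x) : f = g := by
  obtain ⟨f, hf⟩ := f
  obtain ⟨g, hg⟩ := g
  have : f = g := funext h
  subst this
  rfl

theorem phom_congr {A B : Pos} {f g : PHom A B} (h : f = g) (x : A.car) : f.f x = g.f x := by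
  rw [h]

theorem comp_f {A B C : Pos} (g : PHom B C) (f : PHom A B) (x : A.car) :
    (g.comp f).f x = g.f (f.f x) := rfl

theorem id_f {A : Pos} (x : A.car) : (PHom.id A).f x = x := rfl

theorem map_comp_f (M : OMonad) {A B C : Pos} (f : PHom A B) (g : PHom B C)
    (x : (M.obj A).car) :
    (M.map (g.comp f)).f x = (M.map g).f ((M.map f).f x) :=
  phom_congr (M.map_comp f g) x

/-- The discrete poset on a type. -/
def dPos (α : Type) : Pos :=
  ⟨α, { le := fun a b => a = b
        le_refl := fun _ => rfl
        le_trans := fun _ _ _ h h' => Eq.trans h h'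
        le_antisymm := fun _ _ h _ => h }⟩

theorem dPos_le {α : Type} {a b : (dPos α).car} (h : a ≤ b) : a = b := h

/-- Any function out of a discrete poset is monotone. -/
def dHom {α : Type} {B : Pos} (f : α → B.car) : PHom (dPos α) B :=
  ⟨f, fun a b h => by
    have h' : a = b := h
    cases h'
    exact le_refl _⟩

/-- Any function out of a trivially ordered poset is monotone. -/
def mkHom {A B : Pos} (hA : TrivOrder A) (f : A.car → B.car) : PHom A B :=
  ⟨f, fun a b h => by
    cases hA a b h
    exact le_refl _⟩

theorem trivOrder_obj {M : OMonad} (hstd : UsesStdOrder M) {A : Pos} (hA : TrivOrder A) :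
    TrivOrder (M.obj A) := by
  intro s t hst
  obtain ⟨u, h1, h2⟩ := (hstd A s t).mp hst
  have he : relFst A (fun a b => a ≤ b) = relSnd A (fun a b => a ≤ b) :=
    phom_ext (fun p => hA _ _ p.property)
  rw [← h1, ← h2, he]
/- ===== The product algebra X × X ===== -/

def prodPi (M : OMonad) (X : OAlg M) : PHom (M.obj (X.A.prod X.A)) (X.A.prod X.A) :=
  ⟨fun m => (X.pi.f ((M.map (prodFst X.A X.A)).f m),
             X.pi.f ((M.map (prodSnd X.A X.A)).f m)),
    fun a b h => ⟨X.pi.mono ((M.map (prodFst X.A X.A)).mono h),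
                  X.pi.mono ((M.map (prodSnd X.A X.A)).mono h)⟩⟩

theorem prodPi_fst (M : OMonad) (X : OAlg M) (m : (M.obj (X.A.prod X.A)).car) :
    ((prodPi M X).f m).1 = X.pi.f ((M.map (prodFst X.A X.A)).f m) := rfl

theorem prodPi_snd (M : OMonad) (X : OAlg M) (m : (M.obj (X.A.prod X.A)).car) :
    ((prodPi M X).f m).2 = X.pi.f ((M.map (prodSnd X.A X.A)).f m) := rfl

theorem prod_comp_fst (M : OMonad) (X : OAlg M) :
    (prodFst X.A X.A).comp (prodPi M X) = X.pi.comp (M.map (prodFst X.A X.A)) :=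
  phom_ext fun _ => rfl

theorem prod_comp_snd (M : OMonad) (X : OAlg M) :
    (prodSnd X.A X.A).comp (prodPi M X) = X.pi.comp (M.map (prodSnd X.A X.A)) :=
  phom_ext fun _ => rfl

@[reducible]
def prodAlg (M : OMonad) (X : OAlg M) : OAlg M where
  A := X.A.prod X.A
  pi := prodPi M X
  unit_law := phom_ext fun a => by
    have h1 := phom_congr (M.sing_nat (prodFst X.A X.A)) a
    have h2 := phom_congr (M.sing_nat (prodSnd X.A X.A)) a
    have u1 := phom_congr X.unit_law a.1
    have u2 := phom_congr X.unit_law a.2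
    simp only [comp_f, id_f] at h1 h2 u1 u2
    show (X.pi.f ((M.map (prodFst X.A X.A)).f ((M.sing (X.A.prod X.A)).f a)),
          X.pi.f ((M.map (prodSnd X.A X.A)).f ((M.sing (X.A.prod X.A)).f a))) = a
    rw [h1, h2]
    exact Prod.ext_iff.mpr ⟨u1, u2⟩
  assoc_law := phom_ext fun m => by
    have cfst : ∀ (pr : PHom (X.A.prod X.A) X.A),
        pr.comp (prodPi M X) = X.pi.comp (M.map pr) →
        X.pi.f ((M.map pr).f ((M.map (prodPi M X)).f m))
          = X.pi.f ((M.map pr).f ((M.flat (X.A.prod X.A)).f m)) := by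
      intro pr hc
      rw [← map_comp_f, hc, map_comp_f]
      have ha := phom_congr X.assoc_law ((M.map (M.map pr)).f m)
      have hn := phom_congr (M.flat_nat pr) m
      simp only [comp_f] at ha hn
      rw [ha, ← hn]
    have e1 := cfst (prodFst X.A X.A) (prod_comp_fst M X)
    have e2 := cfst (prodSnd X.A X.A) (prod_comp_snd M X)
    show (X.pi.f ((M.map (prodFst X.A X.A)).f ((M.map (prodPi M X)).f m)),
          X.pi.f ((M.map (prodSnd X.A X.A)).f ((M.map (prodPi M X)).f m)))
        = (X.pi.f ((M.map (prodFst X.A X.A)).f ((M.flat (X.A.prod X.A)).f m)),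
           X.pi.f ((M.map (prodSnd X.A X.A)).f ((M.flat (X.A.prod X.A)).f m)))
    rw [e1, e2]

theorem prodAlg_binprod (M : OMonad) (X : OAlg M) : IsBinProd M (prodAlg M X) X X := by
  refine ⟨⟨prodFst X.A X.A, prod_comp_fst M X⟩, ⟨prodSnd X.A X.A, prod_comp_snd M X⟩, ?_, ?_⟩
  · constructor
    · intro a b h
      exact Prod.ext_iff.mpr ⟨congrArg Prod.fst h, congrArg Prod.snd h⟩
    · intro y
      exact ⟨(y.1, y.2), rfl⟩
  · intro x y
    exact Iff.rfl

theorem prodAlg_mem (M : OMonad) (C : Set (OAlg M)) (X : OAlg M) (hX : X ∈ C) :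
    InProdClosure M C (prodAlg M X) :=
  InProdClosure.prod X X (prodAlg M X) (InProdClosure.base X hX) (InProdClosure.base X hX)
    (prodAlg_binprod M X)
/- ===== Basic facts about the free algebra and recognising morphisms ===== -/

theorem dHom_f {α : Type} {B : Pos} (f : α → B.car) (x : α) : (dHom f).f x = f x := rfl

theorem phi_flat {M : OMonad} {Sg : Pos} {X : OAlg M} (φ : OAlgHom (M.free Sg) X)
    (z : (M.obj (M.obj Sg)).car) :
    φ.h.f ((M.flat Sg).f z) = X.pi.f ((M.map φ.h).f z) := by
  have h := phom_congr φ.comm z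
  simp only [comp_f] at h
  exact h

/- ===== The key lemma: pointwise `synLe`-related elements have `K`-related flattenings ===== -/

theorem clubK
    (M : OMonad) (hM : Convention M)
    (C : Set (OAlg M)) (M₀ : OMonad) (ρ : OMonadHom M₀ M) (hfin : FinitaryM M₀)
    (hdense : DenseOver ρ {P | InProdClosure M C P})
    (Sg : Pos)
    (K : Set ((M.obj Sg).car))
    (X : OAlg M) (hX : X ∈ C) (φ : OAlgHom (M.free Sg) X)
    (P : Set X.A.car) (hPK : K = φ.h.f ⁻¹' P)
    (V : (M.obj (relPos (M.obj Sg) (synLe M (M.free Sg) K))).car)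
    (hV : (M.flat Sg).f ((M.map (relFst (M.obj Sg) (synLe M (M.free Sg) K))).f V) ∈ K) :
    (M.flat Sg).f ((M.map (relSnd (M.obj Sg) (synLe M (M.free Sg) K))).f V) ∈ K := by
  classical
  obtain ⟨hinj, hsurj, hbij, hpre, hstd⟩ := hM
  have hKmem : ∀ x, x ∈ K ↔ φ.h.f x ∈ P := fun x => by rw [hPK]; exact Iff.rfl
  set X2 := prodAlg M X with hX2
  set S : Set (X2.A.car) :=
    Set.range (fun v : (relPos (M.obj Sg) (synLe M (M.free Sg) K)).car =>
      ((φ.h.f v.val.1, φ.h.f v.val.2) : X.A.car × X.A.car)) with hS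
  -- the pairing map into the subalgebra of X × X
  let Φ : PHom (relPos (M.obj Sg) (synLe M (M.free Sg) K)) (X2.A.sub S) :=
    ⟨fun v => ⟨(φ.h.f v.val.1, φ.h.f v.val.2), ⟨v, rfl⟩⟩,
     fun p q h => ⟨φ.h.mono h.1, φ.h.mono h.2⟩⟩
  let V₂ := (M.map Φ).f V
  -- density
  obtain ⟨V₀, hV₀⟩ := hdense X2 (prodAlg_mem M C X hX) S V₂
  -- finitariness
  have hdir : Directed (· ⊆ ·)
      (fun F : Finset ((X2.A.sub S).car) => (↑F : Set ((X2.A.sub S).car))) := by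
    intro F G
    refine ⟨F ∪ G, ?_, ?_⟩
    · intro x hx
      exact Finset.mem_coe.mpr (Finset.mem_union_left _ (Finset.mem_coe.mp hx))
    · intro x hx
      exact Finset.mem_coe.mpr (Finset.mem_union_right _ (Finset.mem_coe.mp hx))
  have hcov : (⋃ F : Finset ((X2.A.sub S).car), (↑F : Set ((X2.A.sub S).car))) = Set.univ :=
    Set.eq_univ_of_forall fun x =>
      Set.mem_iUnion.mpr ⟨{x}, Finset.mem_coe.mpr (Finset.mem_singleton_self x)⟩
  obtain ⟨F, W, hW⟩ := hfin (X2.A.sub S) (Finset ((X2.A.sub S).car)) (fun F => ↑F) hdir hcov V₀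
  -- discretisation
  let dd : PHom (dPos (((X2.A.sub S).sub ((↑F : Set ((X2.A.sub S).car)))).car))
      ((X2.A.sub S).sub ((↑F : Set ((X2.A.sub S).car)))) := dHom (fun z => z)
  obtain ⟨wd, hwd⟩ := (hbij dd ⟨fun a b h => h, fun z => ⟨z, rfl⟩⟩).2 ((ρ.app ((X2.A.sub S).sub ((↑F : Set ((X2.A.sub S).car))))).f W)
  -- choice of syntactic witnesses for the pairs in S
  have hch : ∀ ζ : (X2.A.sub S).car,
      ∃ v : (relPos (M.obj Sg) (synLe M (M.free Sg) K)).car,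
        ((φ.h.f v.val.1, φ.h.f v.val.2) : X.A.car × X.A.car) = ζ.val := fun ζ => ζ.2
  let ch : (X2.A.sub S).car → (relPos (M.obj Sg) (synLe M (M.free Sg) K)).car :=
    fun ζ => (hch ζ).choose
  have hch1 : ∀ ζ, φ.h.f (ch ζ).val.1 = ζ.val.1 :=
    fun ζ => congrArg Prod.fst (hch ζ).choose_spec
  have hch2 : ∀ ζ, φ.h.f (ch ζ).val.2 = ζ.val.2 :=
    fun ζ => congrArg Prod.snd (hch ζ).choose_spec
  -- the replacement maps
  let hPH : Finset ((X2.A.sub S).car) → PHom (dPos (((X2.A.sub S).sub ((↑F : Set ((X2.A.sub S).car)))).car)) X.A :=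
    fun G => dHom (fun z => if z.val ∈ G then z.val.val.2 else z.val.val.1)
  -- single replacement step
  have step : ∀ (j : (X2.A.sub S).car) (G : Finset ((X2.A.sub S).car)), j ∉ G →
      X.pi.f ((M.map (hPH G)).f wd) ∈ P → X.pi.f ((M.map (hPH (insert j G))).f wd) ∈ P := by
    intro j G hj hmem
    let gbox : PHom (dPos (((X2.A.sub S).sub ((↑F : Set ((X2.A.sub S).car)))).car)) ((M.obj Sg).addBox) := dHom (fun z =>
      if z.val = j then Sum.inr PUnit.unit
      else Sum.inl (if z.val ∈ G then (ch z.val).val.2 else (ch z.val).val.1))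
    let pt := (M.map gbox).f wd
    have conv : ∀ (w : (M.obj Sg).car) (G' : Finset ((X2.A.sub S).car)),
        φ.h.comp ((substHom M (M.free Sg) w).comp gbox) = hPH G' →
        φ.h.f (ctxEval M (M.free Sg) pt w) = X.pi.f ((M.map (hPH G')).f wd) := by
      intro w G' hG'
      have e0 : ctxEval M (M.free Sg) pt w
          = (M.flat Sg).f ((M.map ((substHom M (M.free Sg) w).comp gbox)).f wd) := by
        show (M.flat Sg).f ((M.map (substHom M (M.free Sg) w)).f ((M.map gbox).f wd)) = _
        rw [map_comp_f]
      rw [e0, phi_flat φ, ← map_comp_f, hG']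
    have hj1 : φ.h.comp ((substHom M (M.free Sg) (ch j).val.1).comp gbox) = hPH G := by
      apply phom_ext
      intro z
      simp only [comp_f, gbox, hPH, dHom]
      by_cases hz : z.val = j
      · rw [if_pos hz, hz, if_neg hj]
        exact hch1 j
      · rw [if_neg hz]
        by_cases hzG : z.val ∈ G
        · rw [if_pos hzG, if_pos hzG]
          exact hch2 z.val
        · rw [if_neg hzG, if_neg hzG]
          exact hch1 z.val
    have hj2 : φ.h.comp ((substHom M (M.free Sg) (ch j).val.2).comp gbox)
        = hPH (insert j G) := by
      apply phom_ext
      intro z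
      simp only [comp_f, gbox, hPH, dHom]
      by_cases hz : z.val = j
      · rw [if_pos hz, hz, if_pos (Finset.mem_insert_self j G)]
        exact hch2 j
      · rw [if_neg hz]
        by_cases hzG : z.val ∈ G
        · rw [if_pos hzG, if_pos (Finset.mem_insert_of_mem hzG)]
          exact hch2 z.val
        · rw [if_neg hzG, if_neg (fun hmem' => by
            rcases Finset.mem_insert.mp hmem' with h | h
            · exact hz h
            · exact hzG h)]
          exact hch1 z.val
    have h1 : ctxEval M (M.free Sg) pt (ch j).val.1 ∈ K :=
      (hKmem _).mpr (by rw [conv _ _ hj1]; exact hmem)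
    have h2 : ctxEval M (M.free Sg) pt (ch j).val.2 ∈ K := (ch j).property pt h1
    have h3 := (hKmem _).mp h2
    rw [conv _ _ hj2] at h3
    exact h3
  -- the chain
  have chain : ∀ G : Finset ((X2.A.sub S).car),
      X.pi.f ((M.map (hPH ∅)).f wd) ∈ P → X.pi.f ((M.map (hPH G)).f wd) ∈ P := by
    intro G
    induction G using Finset.induction_on with
    | empty => exact id
    | @insert j G hj ih => exact fun h0 => step j G hj (ih h0)
  -- endpoint computations
  have endpoint : ∀ (pr : PHom X2.A X.A)
      (lr : PHom (relPos (M.obj Sg) (synLe M (M.free Sg) K)) (M.obj Sg))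
      (G : Finset ((X2.A.sub S).car)),
      hPH G = ((pr.comp (subIncl X2.A S)).comp (subIncl (X2.A.sub S) (↑F))).comp dd →
      (pr.comp (subIncl X2.A S)).comp Φ = φ.h.comp lr →
      X.pi.f ((M.map pr).f ((ρ.app X2.A).f ((M₀.map (subIncl X2.A S)).f V₀)))
        = X.pi.f ((M.map pr).f ((M.map (subIncl X2.A S)).f V₂)) →
      X.pi.f ((M.map (hPH G)).f wd) = φ.h.f ((M.flat Sg).f ((M.map lr).f V)) := by
    intro pr lr G he hΦ hdc
    rw [he, map_comp_f, hwd]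
    -- naturality of ρ at the big inclusion map
    have hnat := phom_congr (ρ.naturality
      ((pr.comp (subIncl X2.A S)).comp (subIncl (X2.A.sub S) (↑F)))) W
    simp only [comp_f] at hnat
    rw [← hnat, map_comp_f M₀, hW, map_comp_f M₀]
    -- naturality of ρ at pr
    have hnat2 := phom_congr (ρ.naturality pr) ((M₀.map (subIncl X2.A S)).f V₀)
    simp only [comp_f] at hnat2
    rw [hnat2, hdc]
    -- now collapse the right hand side
    have hco : (M.map pr).f ((M.map (subIncl X2.A S)).f V₂)
        = (M.map φ.h).f ((M.map lr).f V) := by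
      show (M.map pr).f ((M.map (subIncl X2.A S)).f ((M.map Φ).f V)) = _
      rw [← map_comp_f, ← map_comp_f, hΦ, map_comp_f]
    rw [hco, ← phi_flat φ]
  have EB := endpoint (prodFst X.A X.A) (relFst (M.obj Sg) (synLe M (M.free Sg) K)) ∅
    (phom_ext fun z => by
      simp only [comp_f, hPH, dd, dHom]
      rw [if_neg (Finset.notMem_empty z.val)]
      rfl)
    (phom_ext fun v => rfl)
    (congrArg Prod.fst hV₀)
  have EE := endpoint (prodSnd X.A X.A) (relSnd (M.obj Sg) (synLe M (M.free Sg) K)) F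
    (phom_ext fun z => by
      simp only [comp_f, hPH, dd, dHom]
      rw [if_pos (Finset.mem_coe.mp z.property)]
      rfl)
    (phom_ext fun v => rfl)
    (congrArg Prod.snd hV₀)
  -- put everything together
  have h0 : X.pi.f ((M.map (hPH ∅)).f wd) ∈ P := by
    rw [EB]
    exact (hKmem _).mp hV
  have hF := chain F h0
  rw [EE] at hF
  exact (hKmem _).mpr hF
/- ===== Absorbing contexts: pointwise related elements are syntactically related ===== -/

theorem club
    (M : OMonad) (hM : Convention M)
    (C : Set (OAlg M)) (M₀ : OMonad) (ρ : OMonadHom M₀ M) (hfin : FinitaryM M₀)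
    (hdense : DenseOver ρ {P | InProdClosure M C P})
    (Sg : Pos) (htriv : TrivOrder Sg)
    (K : Set ((M.obj Sg).car))
    (X : OAlg M) (hX : X ∈ C) (φ : OAlgHom (M.free Sg) X)
    (P : Set X.A.car) (hPK : K = φ.h.f ⁻¹' P)
    (V : (M.obj (relPos (M.obj Sg) (synLe M (M.free Sg) K))).car) :
    synLe M (M.free Sg) K
      ((M.flat Sg).f ((M.map (relFst (M.obj Sg) (synLe M (M.free Sg) K))).f V))
      ((M.flat Sg).f ((M.map (relSnd (M.obj Sg) (synLe M (M.free Sg) K))).f V)) := by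
  intro p hp
  have trivMS : TrivOrder (M.obj Sg) := trivOrder_obj hM.2.2.2.2 htriv
  -- the joint context
  let E : PHom ((M.obj Sg).addBox) (M.obj (relPos (M.obj Sg) (synLe M (M.free Sg) K))) :=
    ⟨fun z => Sum.elim
        (fun w => (M.sing (relPos (M.obj Sg) (synLe M (M.free Sg) K))).f
          ⟨(w, w), fun _ hq => hq⟩)
        (fun _ => V) z,
     by
      intro a b h
      cases h with
      | inl h' =>
        cases trivMS _ _ h'
        exact le_refl _
      | inr h' =>
        exact le_refl _⟩
  let V' := (M.flat (relPos (M.obj Sg) (synLe M (M.free Sg) K))).f ((M.map E).f p)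
  have absorb : ∀ (lr : PHom (relPos (M.obj Sg) (synLe M (M.free Sg) K)) (M.obj Sg)),
      (∀ (w : (M.obj Sg).car) (hw : synLe M (M.free Sg) K w w), lr.f ⟨(w, w), hw⟩ = w) →
      (M.flat Sg).f ((M.map lr).f V')
        = ctxEval M (M.free Sg) p ((M.flat Sg).f ((M.map lr).f V)) := by
    intro lr hlr
    -- the evaluated joint context, projected
    let ea : PHom ((M.obj Sg).addBox) (M.obj (M.obj Sg)) :=
      ⟨fun z => Sum.elim (fun w => (M.sing (M.obj Sg)).f w) (fun _ => (M.map lr).f V) z,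
       by
        intro a b h
        cases h with
        | inl h' =>
          cases trivMS _ _ h'
          exact le_refl _
        | inr h' =>
          exact le_refl _⟩
    have s1 : (M.map lr).f V' = (M.flat (M.obj Sg)).f ((M.map ((M.map lr).comp E)).f p) := by
      show (M.map lr).f ((M.flat _).f ((M.map E).f p)) = _
      have hn := phom_congr (M.flat_nat lr) ((M.map E).f p)
      simp only [comp_f] at hn
      rw [hn, ← map_comp_f]
    have s2 : (M.map lr).comp E = ea := by
      apply phom_ext
      intro z
      cases z with
      | inl w =>
        have hs := phom_congr (M.sing_nat lr) (⟨(w, w), fun _ hq => hq⟩ :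
          (relPos (M.obj Sg) (synLe M (M.free Sg) K)).car)
        simp only [comp_f] at hs
        show (M.map lr).f ((M.sing _).f ⟨(w, w), fun _ hq => hq⟩) = (M.sing (M.obj Sg)).f w
        rw [hs]
        exact congrArg (M.sing (M.obj Sg)).f (hlr w _)
      | inr u =>
        rfl
    have s3 : substHom M (M.free Sg) ((M.flat Sg).f ((M.map lr).f V))
        = (M.flat Sg).comp ea := by
      apply phom_ext
      intro z
      cases z with
      | inl w =>
        have hf := phom_congr (M.flat_sing Sg) w
        simp only [comp_f, id_f] at hf
        exact hf.symm
      | inr u =>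
        rfl
    show (M.flat Sg).f ((M.map lr).f V') = (M.flat Sg).f ((M.map (substHom M (M.free Sg)
      ((M.flat Sg).f ((M.map lr).f V)))).f p)
    rw [s1, s2, s3, map_comp_f]
    have ha := phom_congr (M.flat_assoc Sg) ((M.map ea).f p)
    simp only [comp_f] at ha
    rw [← ha]
  have hp' : (M.flat Sg).f ((M.map (relFst (M.obj Sg) (synLe M (M.free Sg) K))).f V') ∈ K := by
    rw [absorb (relFst (M.obj Sg) (synLe M (M.free Sg) K)) (fun w hw => rfl)]
    exact hp
  have hres := clubK M hM C M₀ ρ hfin hdense Sg K X hX φ P hPK V' hp'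
  rw [absorb (relSnd (M.obj Sg) (synLe M (M.free Sg) K)) (fun w hw => rfl)] at hres
  exact hres
/-- Existence of syntactic algebras for essentially finitary monads.  Suppose `M` is
essentially finitary over the class `C`: there is a morphism of monads `ρ : M₀ ⇒ M`
with `M₀` finitary which is dense over the closure of `C` under binary products.
If a language `K ⊆ M Σ` is recognised by a morphism `φ : M Σ → X` with `X ∈ C`, then
`≼_K` is a congruence ordering on `M Σ`; in particular, when `X` is finitary, `≼_K`
has finitary index (so `K` has a syntactic algebra). -/
theorem essentially_finitary_syntactic_algebra (M : OMonad) (hM : Convention M)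
    (C : Set (OAlg M)) (M₀ : OMonad) (ρ : OMonadHom M₀ M) (hfin : FinitaryM M₀)
    (hdense : DenseOver ρ {P | InProdClosure M C P})
    (Sg : Pos) (hfinSg : Finite Sg.car) (htriv : TrivOrder Sg)
    (K : Set ((M.obj Sg).car))
    (X : OAlg M) (hX : X ∈ C) (φ : OAlgHom (M.free Sg) X) (hrec : Recognises φ K) :
    IsCongruenceOrdering M (M.free Sg) (synLe M (M.free Sg) K) ∧
    (FinitaryAlg M X → ∃ T : Set ((M.obj Sg).car), T.Finite ∧
      ∀ s, ∃ t ∈ T, synLe M (M.free Sg) K s t ∧ synLe M (M.free Sg) K t s) := by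
  classical
  obtain ⟨P, hPup, hPK⟩ := hrec
  have trivMS : TrivOrder (M.obj Sg) := trivOrder_obj hM.2.2.2.2 htriv
  have h1 : ∀ a, synLe M (M.free Sg) K a a := fun _ _ hp => hp
  have h2 : ∀ a b c, synLe M (M.free Sg) K a b → synLe M (M.free Sg) K b c →
      synLe M (M.free Sg) K a c := fun _ _ _ hab hbc p hp => hbc p (hab p hp)
  have h3 : ∀ a b : (M.free Sg).A.car, a ≤ b → synLe M (M.free Sg) K a b := by
    intro a b hab
    cases trivMS a b hab
    exact h1 a
  have hKm : ∀ x, x ∈ K ↔ φ.h.f x ∈ P := fun x => by rw [hPK]; exact Iff.rfl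
  constructor
  · refine ⟨h1, h2, h3, ?_⟩
    intro s t hst
    set co : PreCong (M.free Sg).A := ⟨synLe M (M.free Sg) K, h1, h2, h3⟩ with hco
    have hout : ∀ x : (M.obj Sg).car,
        co.setoid.r (Quotient.out (Quotient.mk co.setoid x)) x :=
      fun _ => Quotient.exact (Quotient.out_eq _)
    let τ : (M.obj Sg).car → (M.obj Sg).car := fun x => Quotient.out (Quotient.mk co.setoid x)
    let τPH : PHom (M.obj Sg) (M.obj Sg) := mkHom trivMS τ
    -- every element is syntactically equivalent to its canonical relabelling
    have stepA : ∀ (s' : (M.obj (M.obj Sg)).car),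
        synLe M (M.free Sg) K ((M.flat Sg).f s') ((M.flat Sg).f ((M.map τPH).f s'))
        ∧ synLe M (M.free Sg) K ((M.flat Sg).f ((M.map τPH).f s')) ((M.flat Sg).f s') := by
      intro s'
      constructor
      · let lam1 : PHom (M.obj Sg) (relPos (M.obj Sg) (synLe M (M.free Sg) K)) :=
          mkHom trivMS (fun x => ⟨(x, τ x), (hout x).2⟩)
        have e1 : (relFst (M.obj Sg) (synLe M (M.free Sg) K)).comp lam1 = PHom.id (M.obj Sg) :=
          phom_ext fun _ => rfl
        have e2 : (relSnd (M.obj Sg) (synLe M (M.free Sg) K)).comp lam1 = τPH :=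
          phom_ext fun _ => rfl
        have c1 := club M hM C M₀ ρ hfin hdense Sg htriv K X hX φ P hPK ((M.map lam1).f s')
        rw [← map_comp_f, ← map_comp_f, e1, e2, M.map_id] at c1
        simp only [id_f] at c1
        exact c1
      · let lam2 : PHom (M.obj Sg) (relPos (M.obj Sg) (synLe M (M.free Sg) K)) :=
          mkHom trivMS (fun x => ⟨(τ x, x), (hout x).1⟩)
        have e1 : (relFst (M.obj Sg) (synLe M (M.free Sg) K)).comp lam2 = τPH :=
          phom_ext fun _ => rfl
        have e2 : (relSnd (M.obj Sg) (synLe M (M.free Sg) K)).comp lam2 = PHom.id (M.obj Sg) :=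
          phom_ext fun _ => rfl
        have c2 := club M hM C M₀ ρ hfin hdense Sg htriv K X hX φ P hPK ((M.map lam2).f s')
        rw [← map_comp_f, ← map_comp_f, e1, e2, M.map_id] at c2
        simp only [id_f] at c2
        exact c2
    -- the standard-order witness for the hypothesis
    obtain ⟨u, hu1, hu2⟩ := (hM.2.2.2.2 (quotPos co) ((M.map (quotHom co)).f s)
      ((M.map (quotHom co)).f t)).mp hst
    let ddR : PHom (dPos ((relPos (quotPos co) (fun a b => a ≤ b)).car))
        (relPos (quotPos co) (fun a b => a ≤ b)) := dHom (fun z => z)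
    obtain ⟨ud, hud⟩ := (hM.2.2.1 ddR ⟨fun a b h => h, fun z => ⟨z, rfl⟩⟩).2 u
    let qd : PHom (M.obj Sg) (dPos ((quotPos co).car)) :=
      mkHom trivMS (fun x => Quotient.mk co.setoid x)
    let dQ : PHom (dPos ((quotPos co).car)) (quotPos co) := dHom (fun a => a)
    let outd : PHom (dPos ((quotPos co).car)) (M.obj Sg) := dHom Quotient.out
    let rfd : PHom (dPos ((relPos (quotPos co) (fun a b => a ≤ b)).car))
        (dPos ((quotPos co).car)) := dHom (fun z => z.val.1)
    let rsd : PHom (dPos ((relPos (quotPos co) (fun a b => a ≤ b)).car))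
        (dPos ((quotPos co).car)) := dHom (fun z => z.val.2)
    have le_out : ∀ z : (relPos (quotPos co) (fun a b => a ≤ b)).car,
        synLe M (M.free Sg) K (Quotient.out z.val.1) (Quotient.out z.val.2) := by
      intro z
      have hle : z.val.1 ≤ z.val.2 := z.property
      rw [← Quotient.out_eq z.val.1, ← Quotient.out_eq z.val.2] at hle
      exact hle
    let Xi : PHom (dPos ((relPos (quotPos co) (fun a b => a ≤ b)).car))
        (relPos (M.obj Sg) (synLe M (M.free Sg) K)) :=
      dHom (fun z => ⟨(Quotient.out z.val.1, Quotient.out z.val.2), le_out z⟩)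
    have inj : Function.Injective (M.map dQ).f :=
      (hM.2.2.1 dQ ⟨fun a b h => h, fun y => ⟨y, rfl⟩⟩).1
    have keyid : ∀ (rq : PHom (relPos (quotPos co) (fun a b => a ≤ b)) (quotPos co))
        (rd : PHom (dPos ((relPos (quotPos co) (fun a b => a ≤ b)).car))
          (dPos ((quotPos co).car)))
        (lr : PHom (relPos (M.obj Sg) (synLe M (M.free Sg) K)) (M.obj Sg))
        (s' : (M.obj (M.obj Sg)).car),
        dQ.comp rd = rq.comp ddR → lr.comp Xi = outd.comp rd →
        (M.map rq).f u = (M.map (quotHom co)).f s' →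
        (M.map lr).f ((M.map Xi).f ud) = (M.map τPH).f s' := by
      intro rq rd lr s' hcomm hcomm2 hu
      have a1 : (M.map dQ).f ((M.map rd).f ud) = (M.map (quotHom co)).f s' := by
        rw [← map_comp_f, hcomm, map_comp_f, hud, hu]
      have a2 : (M.map dQ).f ((M.map qd).f s') = (M.map (quotHom co)).f s' := by
        rw [← map_comp_f]
        have hq : dQ.comp qd = quotHom co := phom_ext fun _ => rfl
        rw [hq]
      have a3 : (M.map rd).f ud = (M.map qd).f s' := inj (a1.trans a2.symm)
      rw [← map_comp_f, hcomm2, map_comp_f, a3, ← map_comp_f]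
      have ho : outd.comp qd = τPH := phom_ext fun _ => rfl
      rw [ho]
    have I1 := keyid (relFst (quotPos co) (fun a b => a ≤ b)) rfd
      (relFst (M.obj Sg) (synLe M (M.free Sg) K)) s
      (phom_ext fun _ => rfl) (phom_ext fun _ => rfl) hu1
    have I2 := keyid (relSnd (quotPos co) (fun a b => a ≤ b)) rsd
      (relSnd (M.obj Sg) (synLe M (M.free Sg) K)) t
      (phom_ext fun _ => rfl) (phom_ext fun _ => rfl) hu2
    have cmid := club M hM C M₀ ρ hfin hdense Sg htriv K X hX φ P hPK ((M.map Xi).f ud)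
    rw [I1, I2] at cmid
    exact h2 _ _ _ (stepA s).1 (h2 _ _ _ cmid (stepA t).2)
  · intro hXfin
    haveI : Finite X.A.car := hXfin.1
    have key : ∀ a b : (M.obj Sg).car, φ.h.f a = φ.h.f b → synLe M (M.free Sg) K a b := by
      intro a b hab p hp
      have hctx : φ.h.f (ctxEval M (M.free Sg) p a) = φ.h.f (ctxEval M (M.free Sg) p b) := by
        show φ.h.f ((M.flat Sg).f ((M.map (substHom M (M.free Sg) a)).f p))
          = φ.h.f ((M.flat Sg).f ((M.map (substHom M (M.free Sg) b)).f p))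
        rw [phi_flat φ, phi_flat φ, ← map_comp_f, ← map_comp_f]
        have hsb : φ.h.comp (substHom M (M.free Sg) a) = φ.h.comp (substHom M (M.free Sg) b) := by
          apply phom_ext
          intro z
          cases z with
          | inl x => rfl
          | inr u => exact hab
        rw [hsb]
      exact (hKm _).mpr (hctx ▸ (hKm _).mp hp)
    refine ⟨Set.range (fun x : {x : X.A.car // ∃ s₀, φ.h.f s₀ = x} => x.2.choose), ?_, ?_⟩
    · exact Set.finite_range _
    · intro s
      have hx : ∃ s₀, φ.h.f s₀ = φ.h.f s := ⟨s, rfl⟩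
      refine ⟨(⟨φ.h.f s, hx⟩ : {x : X.A.car // ∃ s₀, φ.h.f s₀ = x}).2.choose,
        ⟨⟨φ.h.f s, hx⟩, rfl⟩, ?_, ?_⟩
      · exact key _ _ hx.choose_spec.symm
      · exact key _ _ hx.choose_spec
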